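/- There is an absolute constant C such that the following holds. Let (T',T'') be a pair of SLPs over the alphabet {a,f} of total size m such that the symbol a occurs in str(T''), and let s = str(T')·str(T'')^ω. Then there exists a pair (P',P'') of SLPs over {0,1} of total size at most C·m with str(P')·str(P'')^ω = h(s), where h is the composition h3∘h2∘h1 applied to s: h1 replaces every occurrence of the factor af by the single symbol 1 (these occurrences in a word over {a,f} are pairwise disjoint, so this is well defined), h2 then replaces every remaining a by 0, and h3 erases every remaining f. -/

import Mathlib

/-- The auxiliary alphabet `{a, f}` used in transcripts of computations. -/
inductive AF
  | a
  | f
deriving DecidableEq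

/-- A straight-line program in Chomsky normal form over alphabet `α`:
nonterminals are `Fin n`, each production is either a terminal or a pair of
nonterminals with strictly smaller indices (this index condition is a
topological ordering witnessing acyclicity of the SLP).  The size of such an
SLP is its number `n` of nonterminals. -/
structure CnfSLP (α : Type) where
  n : ℕ
  ax : Fin n
  prod : Fin n → α ⊕ (Fin n × Fin n)
  wf : ∀ (i B C : Fin n), prod i = Sum.inr (B, C) → B < i ∧ C < i

namespace CnfSLP

variable {α : Type}

/-- The word generated by nonterminal `i`. -/
def strAt (P : CnfSLP α) : Fin P.n → List α
  | i =>
    match h : P.prod i with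
    | Sum.inl a => [a]
    | Sum.inr (B, C) => P.strAt B ++ P.strAt C
termination_by i => i.val
decreasing_by
  · exact (P.wf i B C h).1
  · exact (P.wf i B C h).2

/-- The word generated by the SLP (from its axiom). -/
def str (P : CnfSLP α) : List α := P.strAt P.ax

/-- The size of an SLP: the number of nonterminals (in Chomsky normal form). -/
def size (P : CnfSLP α) : ℕ := P.n

end CnfSLP

namespace CnfSLP

variable {α : Type}

theorem strAt_inl (P : CnfSLP α) (i : Fin P.n) (b : α) (h : P.prod i = Sum.inl b) :
    P.strAt i = [b] := by
  rw [strAt]; split <;> simp_all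

theorem strAt_inr (P : CnfSLP α) (i B C : Fin P.n) (h : P.prod i = Sum.inr (B, C)) :
    P.strAt i = P.strAt B ++ P.strAt C := by
  rw [strAt]; split <;> simp_all

theorem strAt_congr (P : CnfSLP α) (i j : Fin P.n) (h : P.prod i = P.prod j) :
    P.strAt i = P.strAt j := by
  rcases hj : P.prod j with b | ⟨B, C⟩
  · rw [strAt_inl P i b (h.trans hj), strAt_inl P j b hj]
  · rw [strAt_inr P i B C (h.trans hj), strAt_inr P j B C hj]

theorem strAt_ne_nil (P : CnfSLP α) (i : Fin P.n) : P.strAt i ≠ [] := by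
  rcases hj : P.prod i with b | ⟨B, C⟩
  · simp [strAt_inl P i b hj]
  · rw [strAt_inr P i B C hj]
    simp only [ne_eq, List.append_eq_nil_iff]
    intro h
    exact (P.strAt_ne_nil B) h.1
termination_by i.val
decreasing_by exact (P.wf i B C hj).1

end CnfSLP

/-- The homomorphic image: for each `a` in `x`, a bit saying whether the next
letter (within `x`, or the context `c` if the `a` is last) is `f`. -/
def gmap : List AF → AF → List Bool
  | [], _ => []
  | AF.a :: t, c => decide (t.headD c = AF.f) :: gmap t c
  | AF.f :: t, c => gmap t c

theorem headD_congr {β : Type*} (l : List β) (hl : l ≠ []) (c d : β) :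
    l.headD c = l.headD d := by cases l <;> simp_all

theorem headD_append {β : Type*} (l m : List β) (hl : l ≠ []) (c : β) :
    (l ++ m).headD c = l.headD c := by cases l <;> simp_all

theorem gmap_length (x : List AF) (c : AF) : (gmap x c).length = x.count AF.a := by
  induction x generalizing c with
  | nil => simp [gmap]
  | cons y t ih =>
    cases y <;> simp [gmap, ih, List.count_cons]

theorem gmap_append (x y : List AF) (c : AF) :
    gmap (x ++ y) c = gmap x (y.headD c) ++ gmap y c := by
  induction x with
  | nil => simp [gmap]
  | cons z t ih =>
    cases z with
    | a =>
      simp only [List.cons_append, gmap, ih]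
      congr 2
      cases t <;> simp
    | f =>
      show gmap (AF.f :: (t ++ y)) c = _
      simp only [gmap, ih]

theorem gmap_eq_nil (x : List AF) (c : AF) (hx : AF.a ∉ x) : gmap x c = [] := by
  have := gmap_length x c
  rw [List.count_eq_zero_of_not_mem hx] at this
  exact List.eq_nil_of_length_eq_zero this


namespace CnfSLP

/-- First letter of `strAt i`. -/
def firstL (P : CnfSLP AF) (i : Fin P.n) : AF := (P.strAt i).headD AF.a

def code {n : ℕ} (i : Fin n) (c : AF) : Fin (2 * n) :=
  ⟨2 * i.val + (if c = AF.f then 1 else 0), by have := i.isLt; split <;> omega⟩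

/-- Productions of the transformed SLP. -/
def prodQ (P : CnfSLP AF) : (m : ℕ) → m < P.n → AF → Bool ⊕ (Fin (2 * P.n) × Fin (2 * P.n))
  | m, hm, c =>
    match h : P.prod ⟨m, hm⟩ with
    | Sum.inl AF.a => Sum.inl (decide (c = AF.f))
    | Sum.inl AF.f => Sum.inl false
    | Sum.inr (B, C) =>
      if AF.a ∈ P.strAt B then
        if AF.a ∈ P.strAt C then
          Sum.inr (code B (P.firstL C), code C c)
        else prodQ P B.val B.isLt (P.firstL C)
      else prodQ P C.val C.isLt c
termination_by m => m
decreasing_by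
  · exact (P.wf _ B C h).1
  · exact (P.wf _ B C h).2

theorem prodQ_bound (P : CnfSLP AF) (m : ℕ) (hm : m < P.n) (c : AF) (p q : Fin (2 * P.n))
    (h : P.prodQ m hm c = Sum.inr (p, q)) : p.val < 2 * m ∧ q.val < 2 * m := by
  rw [prodQ] at h
  split at h
  · simp at h
  · simp at h
  · rename_i B C hBC
    have hB : B.val < m := (P.wf _ B C hBC).1
    have hC : C.val < m := (P.wf _ B C hBC).2
    split at h
    · split at h
      · injection h with h'
        injection h' with hp hq
        subst hp; subst hq
        constructor <;> (simp only [code]; split <;> omega)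
      · have := P.prodQ_bound B.val B.isLt (P.firstL C) p q h
        omega
    · have := P.prodQ_bound C.val C.isLt c p q h
      omega
termination_by m
decreasing_by all_goals assumption

/-- The transformed SLP computing `gmap P.str c`. -/
def transform (P : CnfSLP AF) (c : AF) : CnfSLP Bool where
  n := 2 * P.n
  ax := code P.ax c
  prod := fun k => P.prodQ (k.val / 2) (by have := k.isLt; omega)
      (if k.val % 2 = 1 then AF.f else AF.a)
  wf := by
    intro k B C h
    have := P.prodQ_bound _ _ _ _ _ h
    have hk : 2 * (k.val / 2) ≤ k.val := by omega
    constructor <;> · show _ < k.val; omega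

theorem prodQ_congr (P : CnfSLP AF) (m m' : ℕ) (hm : m < P.n) (hm' : m' < P.n) (c : AF)
    (h : m = m') : P.prodQ m hm c = P.prodQ m' hm' c := by subst h; rfl

theorem transform_prod (P : CnfSLP AF) (c : AF) (i : Fin P.n) (d : AF) :
    (P.transform c).prod (code i d) = P.prodQ i.val i.isLt d := by
  show P.prodQ ((2 * i.val + _) / 2) _ _ = P.prodQ i.val i.isLt d
  have h1 : (2 * i.val + (if d = AF.f then 1 else 0)) / 2 = i.val := by split <;> omega
  have h2 : (2 * i.val + (if d = AF.f then 1 else 0)) % 2 = (if d = AF.f then 1 else 0) := by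
    split <;> omega
  refine (prodQ_congr P _ i.val _ i.isLt _ h1).trans ?_
  congr 1
  show (if (2 * i.val + (if d = AF.f then 1 else 0)) % 2 = 1 then AF.f else AF.a) = d
  rw [h2]
  cases d <;> simp

theorem transform_strAt (P : CnfSLP AF) (c : AF) (i : Fin P.n) (d : AF)
    (hA : AF.a ∈ P.strAt i) :
    (P.transform c).strAt (code i d) = gmap (P.strAt i) d := by
  rcases h : P.prod i with b | ⟨B, C⟩
  · have hs := P.strAt_inl i b h
    rw [hs] at hA
    simp only [List.mem_singleton] at hA
    subst hA
    have hq : P.prodQ i.val i.isLt d = Sum.inl (decide (d = AF.f)) := by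
      rw [prodQ]
      have h' : P.prod ⟨i.val, i.isLt⟩ = Sum.inl AF.a := by rwa [Fin.eta]
      rw [h']
    rw [strAt_inl _ _ _ ((transform_prod P c i d).trans hq), hs]
    simp [gmap]
  · have hs := P.strAt_inr i B C h
    have h' : P.prod ⟨i.val, i.isLt⟩ = Sum.inr (B, C) := by rwa [Fin.eta]
    rw [hs]
    rw [hs] at hA
    simp only [List.mem_append] at hA
    by_cases hB : AF.a ∈ P.strAt B <;> by_cases hC : AF.a ∈ P.strAt C
    · have hq : P.prodQ i.val i.isLt d = Sum.inr (code B (P.firstL C), code C d) := by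
        rw [prodQ, h']; simp [hB, hC]
      rw [strAt_inr _ _ _ _ ((transform_prod P c i d).trans hq)]
      rw [P.transform_strAt c B (P.firstL C) hB, P.transform_strAt c C d hC]
      rw [gmap_append]
      congr 2
      rw [firstL, headD_congr _ (P.strAt_ne_nil C)]
    · have hq : P.prodQ i.val i.isLt d = P.prodQ B.val B.isLt (P.firstL C) := by
        rw [prodQ, h']; simp [hB, hC]
      rw [strAt_congr _ _ (code B (P.firstL C))
        (((transform_prod P c i d).trans hq).trans (transform_prod P c B (P.firstL C)).symm)]
      rw [P.transform_strAt c B (P.firstL C) hB]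
      rw [gmap_append, gmap_eq_nil _ _ hC, List.append_nil]
      congr 1
      rw [firstL, headD_congr _ (P.strAt_ne_nil C)]
    · have hq : P.prodQ i.val i.isLt d = P.prodQ C.val C.isLt d := by
        rw [prodQ, h']; simp [hB]
      rw [strAt_congr _ _ (code C d)
        (((transform_prod P c i d).trans hq).trans (transform_prod P c C d).symm)]
      rw [P.transform_strAt c C d hC]
      rw [gmap_append, gmap_eq_nil _ _ hB, List.nil_append]
    · tauto
termination_by i.val
decreasing_by
  · exact (P.wf i B C h).1
  · exact (P.wf i B C h).2
  · exact (P.wf i B C h).1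
  · exact (P.wf i B C h).2

theorem transform_str (P : CnfSLP AF) (c : AF) (hA : AF.a ∈ P.str) :
    (P.transform c).str = gmap P.str c :=
  P.transform_strAt c P.ax c hA

theorem transform_size (P : CnfSLP AF) (c : AF) : (P.transform c).size = 2 * P.n := rfl

end CnfSLP

namespace CnfSLP

/-- SLP for the concatenation of two SLPs. -/
def catSLP (P Q : CnfSLP α) : CnfSLP α where
  n := P.n + Q.n + 1
  ax := ⟨P.n + Q.n, by omega⟩
  prod := fun k =>
    if h : k.val < P.n then
      match P.prod ⟨k.val, h⟩ with
      | Sum.inl b => Sum.inl b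
      | Sum.inr (B, C) => Sum.inr (⟨B.val, by omega⟩, ⟨C.val, by omega⟩)
    else if h2 : k.val < P.n + Q.n then
      match Q.prod ⟨k.val - P.n, by omega⟩ with
      | Sum.inl b => Sum.inl b
      | Sum.inr (B, C) => Sum.inr (⟨P.n + B.val, by omega⟩, ⟨P.n + C.val, by omega⟩)
    else Sum.inr (⟨P.ax.val, by have := P.ax.isLt; omega⟩,
                  ⟨P.n + Q.ax.val, by have := Q.ax.isLt; omega⟩)
  wf := by
    intro k B C h
    split at h
    · rename_i hk
      split at h
      · simp at h
      · rename_i B' C' hBC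
        have := P.wf _ B' C' hBC
        have h1 : B'.val < k.val := this.1
        have h2 : C'.val < k.val := this.2
        injection h with h'
        injection h' with hp hq
        subst hp; subst hq
        exact ⟨h1, h2⟩
    · split at h
      · rename_i hk2
        split at h
        · simp at h
        · rename_i B' C' hBC
          rename_i hk
          have := Q.wf _ B' C' hBC
          have h1 : B'.val < k.val - P.n := this.1
          have h2 : C'.val < k.val - P.n := this.2
          injection h with h'
          injection h' with hp hq
          subst hp; subst hq
          constructor
          · show P.n + B'.val < k.val; omega
          · show P.n + C'.val < k.val; omega
      · rename_i hk hk2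
        have hk3 : k.val < P.n + Q.n + 1 := k.isLt
        have hB := P.ax.isLt
        have hC := Q.ax.isLt
        injection h with h'
        injection h' with hp hq
        subst hp; subst hq
        constructor
        · show P.ax.val < k.val; omega
        · show P.n + Q.ax.val < k.val; omega

theorem catSLP_n (P Q : CnfSLP α) : (catSLP P Q).n = P.n + Q.n + 1 := rfl

theorem catSLP_strAt_left (P Q : CnfSLP α) (i : Fin P.n) :
    (catSLP P Q).strAt ⟨i.val, by (try rw [catSLP_n]); have := i.isLt; omega⟩ = P.strAt i := by
  rcases h : P.prod i with b | ⟨B, C⟩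
  · have h' : P.prod ⟨i.val, i.isLt⟩ = Sum.inl b := by rwa [Fin.eta]
    have hc : (catSLP P Q).prod ⟨i.val, by (try rw [catSLP_n]); have := i.isLt; omega⟩ = Sum.inl b := by
      dsimp only [catSLP]
      show (if h : i.val < P.n then _ else _) = _
      rw [dif_pos i.isLt, h']
    rw [strAt_inl _ _ _ hc, P.strAt_inl i b h]
  · have h' : P.prod ⟨i.val, i.isLt⟩ = Sum.inr (B, C) := by rwa [Fin.eta]
    have hc : (catSLP P Q).prod ⟨i.val, by (try rw [catSLP_n]); have := i.isLt; omega⟩ =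
        Sum.inr (⟨B.val, by (try rw [catSLP_n]); have := B.isLt; omega⟩, ⟨C.val, by (try rw [catSLP_n]); have := C.isLt; omega⟩) := by
      dsimp only [catSLP]
      show (if h : i.val < P.n then _ else _) = _
      rw [dif_pos i.isLt, h']
    rw [strAt_inr _ _ _ _ hc, P.strAt_inr i B C h,
      catSLP_strAt_left P Q B, catSLP_strAt_left P Q C]
termination_by i.val
decreasing_by
  · exact (P.wf i B C h).1
  · exact (P.wf i B C h).2

theorem catSLP_strAt_right (P Q : CnfSLP α) (j : Fin Q.n) :
    (catSLP P Q).strAt ⟨P.n + j.val, by (try rw [catSLP_n]); have := j.isLt; omega⟩ = Q.strAt j := by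
  rcases h : Q.prod j with b | ⟨B, C⟩
  · have h' : Q.prod ⟨P.n + j.val - P.n, by (try rw [catSLP_n]); have := j.isLt; omega⟩ = Sum.inl b := by
      have : P.n + j.val - P.n = j.val := by omega
      rw [show (⟨P.n + j.val - P.n, by (try rw [catSLP_n]); have := j.isLt; omega⟩ : Fin Q.n) = j from Fin.ext this]
      exact h
    have hc : (catSLP P Q).prod ⟨P.n + j.val, by (try rw [catSLP_n]); have := j.isLt; omega⟩ = Sum.inl b := by
      dsimp only [catSLP]
      show (if h : P.n + j.val < P.n then _ else _) = _
      rw [dif_neg (show ¬ (P.n + j.val < P.n) by omega), dif_pos (show P.n + j.val < P.n + Q.n by have := j.isLt; omega)]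
      rw [h']
    rw [strAt_inl _ _ _ hc, Q.strAt_inl j b h]
  · have h' : Q.prod ⟨P.n + j.val - P.n, by (try rw [catSLP_n]); have := j.isLt; omega⟩ = Sum.inr (B, C) := by
      have : P.n + j.val - P.n = j.val := by omega
      rw [show (⟨P.n + j.val - P.n, by (try rw [catSLP_n]); have := j.isLt; omega⟩ : Fin Q.n) = j from Fin.ext this]
      exact h
    have hc : (catSLP P Q).prod ⟨P.n + j.val, by (try rw [catSLP_n]); have := j.isLt; omega⟩ =
        Sum.inr (⟨P.n + B.val, by (try rw [catSLP_n]); have := B.isLt; omega⟩,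
                 ⟨P.n + C.val, by (try rw [catSLP_n]); have := C.isLt; omega⟩) := by
      dsimp only [catSLP]
      show (if h : P.n + j.val < P.n then _ else _) = _
      rw [dif_neg (show ¬ (P.n + j.val < P.n) by omega), dif_pos (show P.n + j.val < P.n + Q.n by have := j.isLt; omega)]
      rw [h']
    rw [strAt_inr _ _ _ _ hc, Q.strAt_inr j B C h,
      catSLP_strAt_right P Q B, catSLP_strAt_right P Q C]
termination_by j.val
decreasing_by
  · exact (Q.wf j B C h).1
  · exact (Q.wf j B C h).2

theorem catSLP_str (P Q : CnfSLP α) : (catSLP P Q).str = P.str ++ Q.str := by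
  have hc : (catSLP P Q).prod (catSLP P Q).ax =
      Sum.inr (⟨P.ax.val, by rw [catSLP_n]; have := P.ax.isLt; omega⟩,
               ⟨P.n + Q.ax.val, by rw [catSLP_n]; have := Q.ax.isLt; omega⟩) := by
    dsimp only [catSLP]
    show (if h : P.n + Q.n < P.n then _ else _) = _
    rw [dif_neg (show ¬ (P.n + Q.n < P.n) by omega),
        dif_neg (show ¬ (P.n + Q.n < P.n + Q.n) by omega)]
  show (catSLP P Q).strAt _ = _
  rw [strAt_inr _ _ _ _ hc, catSLP_strAt_left P Q P.ax, catSLP_strAt_right P Q Q.ax]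
  rfl

end CnfSLP

/-- `Generates u w c` means the infinite sequence `u · w^ω` is well defined
(`w` is nonempty) and equals the sequence `c`. -/
def Generates {α : Type} (u w : List α) (c : ℕ → α) : Prop :=
  w ≠ [] ∧ ∀ i : ℕ,
    (if i < u.length then u[i]? else w[(i - u.length) % w.length]?) = some (c i)

section Periodic

variable {β : Type}

theorem rep_len (W : List β) (k : ℕ) : ((List.replicate k W).flatten).length = k * W.length := by
  induction k with
  | zero => simp
  | succ k ih => simp [List.replicate_succ, ih, Nat.succ_mul]; ring

theorem rep_getElem? (W : List β) (hW : W ≠ []) (k j : ℕ) (hj : j < k * W.length) :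
    ((List.replicate k W).flatten)[j]? = W[j % W.length]? := by
  induction k generalizing j with
  | zero => omega
  | succ k ih =>
    rw [List.replicate_succ, List.flatten_cons]
    by_cases h : j < W.length
    · rw [List.getElem?_append_left h, Nat.mod_eq_of_lt h]
    · have hmul : (k + 1) * W.length = k * W.length + W.length := by ring
      rw [List.getElem?_append_right (by omega), ih _ (by omega),
        show j % W.length = (j - W.length) % W.length from Nat.mod_eq_sub_mod (by omega)]

theorem periodic_index (U W : List β) (hW : W ≠ []) (k i : ℕ)
    (hi : i < U.length + k * W.length) :
    (U ++ (List.replicate k W).flatten)[i]? =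
      if i < U.length then U[i]? else W[(i - U.length) % W.length]? := by
  by_cases h : i < U.length
  · rw [List.getElem?_append_left h, if_pos h]
  · rw [List.getElem?_append_right (by omega), if_neg h,
      rep_getElem? W hW k _ (by omega)]

theorem generates_elem {u w : List β} {s : ℕ → β} (hgen : Generates u w s) (k i : ℕ)
    (hi : i < u.length + k * w.length) :
    (u ++ (List.replicate k w).flatten)[i]? = some (s i) := by
  rw [periodic_index u w hgen.1 k i hi]
  exact hgen.2 i

theorem generates_of_elems (U W : List β) (t : ℕ → β) (hW : W ≠ [])
    (H : ∀ k i, i < U.length + k * W.length →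
      (U ++ (List.replicate k W).flatten)[i]? = some (t i)) :
    Generates U W t := by
  refine ⟨hW, fun i => ?_⟩
  have hWl : 0 < W.length := List.length_pos_iff.mpr hW
  have hi : i < U.length + (i + 1) * W.length := by nlinarith
  rw [← periodic_index U W hW (i + 1) i hi]
  exact H (i + 1) i hi

end Periodic

section Count

variable (s : ℕ → AF) (posa : ℕ → ℕ)

def cntA (n : ℕ) : ℕ := ((Finset.range n).filter (fun p => s p = AF.a)).card

variable {s posa}
variable (hmono : StrictMono posa) (hpos : ∀ i : ℕ, s (posa i) = AF.a)
  (hsurj : ∀ n : ℕ, s n = AF.a → ∃ i, posa i = n)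

include hmono hpos hsurj

theorem cntA_posa (j : ℕ) : cntA s (posa j) = j := by
  have himg : (Finset.range (posa j)).filter (fun p => s p = AF.a) =
      (Finset.range j).image posa := by
    ext p
    simp only [Finset.mem_filter, Finset.mem_range, Finset.mem_image]
    constructor
    · rintro ⟨hp, ha⟩
      obtain ⟨i, hi⟩ := hsurj p ha
      exact ⟨i, by rwa [← hi, hmono.lt_iff_lt] at hp, hi⟩
    · rintro ⟨i, hi, rfl⟩
      exact ⟨hmono hi, hpos i⟩
  rw [cntA, himg, Finset.card_image_of_injOn (Set.injOn_of_injective hmono.injective),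
    Finset.card_range]

theorem posa_cntA (n : ℕ) (hn : s n = AF.a) : posa (cntA s n) = n := by
  obtain ⟨i, rfl⟩ := hsurj n hn
  rw [cntA_posa hmono hpos hsurj]

theorem gmap_prefix : ∀ n : ℕ,
    gmap (List.ofFn (fun i : Fin n => s i)) (s n) =
      (List.range (cntA s n)).map (fun i => decide (s (posa i + 1) = AF.f)) := by
  intro n
  induction n with
  | zero =>
    simp [gmap, cntA]
  | succ n ih =>
    have hofn : (List.ofFn (fun i : Fin (n+1) => s i)) =
        (List.ofFn (fun i : Fin n => s i)) ++ [s n] := by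
      rw [List.ofFn_succ']
      simp [List.concat_eq_append]
    rw [hofn, gmap_append]
    simp only [List.headD_cons]
    rcases hsn : s n with _ | _
    · -- s n = a
      have hcnt : cntA s (n + 1) = cntA s n + 1 := by
        rw [cntA, cntA, Finset.range_add_one, Finset.filter_insert, if_pos hsn,
          Finset.card_insert_of_notMem (by simp)]
      have hbit : decide (s (n + 1) = AF.f) =
          decide (s (posa (cntA s n) + 1) = AF.f) := by
        rw [posa_cntA hmono hpos hsurj n hsn]
      rw [hsn] at ih
      rw [ih, hcnt, List.range_succ, List.map_append]
      show _ ++ gmap [AF.a] (s (n+1)) = _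
      simp [gmap, hbit]
    · -- s n = f
      have hcnt : cntA s (n + 1) = cntA s n := by
        rw [cntA, cntA, Finset.range_add_one, Finset.filter_insert, if_neg (by simp [hsn])]
      rw [hsn] at ih
      rw [ih, hcnt]
      show _ ++ gmap [AF.f] (s (n+1)) = _
      simp [gmap]

end Count

theorem gmap_flatten (w : List AF) (hw : w ≠ []) : ∀ (k : ℕ) (v : List AF),
    gmap (v ++ (List.replicate k w).flatten) (w.headD AF.a)
      = gmap v (w.headD AF.a) ++ (List.replicate k (gmap w (w.headD AF.a))).flatten := by
  intro k
  induction k with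
  | zero => simp
  | succ k ih =>
    intro v
    rw [List.replicate_succ, List.flatten_cons, ← List.append_assoc, ih (v ++ w),
      gmap_append v w, headD_congr w hw _ AF.a,
      List.replicate_succ, List.flatten_cons, List.append_assoc]

theorem getElem?_zero_headD (w : List AF) (hw : w ≠ []) : w[0]? = some (w.headD AF.a) := by
  cases w <;> simp_all

theorem key_generates (u w : List AF) (s : ℕ → AF) (posa : ℕ → ℕ) (hA : AF.a ∈ w)
    (hgen : Generates u w s) (hmono : StrictMono posa)
    (hpos : ∀ i : ℕ, s (posa i) = AF.a)
    (hsurj : ∀ n : ℕ, s n = AF.a → ∃ i, posa i = n) :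
    Generates (gmap (u ++ w) (w.headD AF.a)) (gmap w (w.headD AF.a))
      (fun i => decide (s (posa i + 1) = AF.f)) := by
  have hw : w ≠ [] := hgen.1
  set fw := w.headD AF.a with hfw
  have hWne : gmap w fw ≠ [] := by
    intro hcon
    have := gmap_length w fw
    rw [hcon] at this
    simp only [List.length_nil] at this
    exact absurd (List.count_pos_iff.mpr hA) (by omega)
  apply generates_of_elems _ _ _ hWne
  intro k i hi
  set N := u.length + (k + 1) * w.length with hN
  have e1 : gmap (u ++ w) fw ++ (List.replicate k (gmap w fw)).flatten
      = gmap (u ++ (List.replicate (k + 1) w).flatten) fw := by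
    rw [gmap_flatten w hw (k + 1) u, gmap_append u w, headD_congr w hw _ AF.a,
      List.replicate_succ, List.flatten_cons, List.append_assoc]
  have hsN : s N = fw := by
    have h2 := hgen.2 N
    rw [if_neg (by omega)] at h2
    have hsub : N - u.length = (k + 1) * w.length := by omega
    rw [hsub, Nat.mul_mod_left, getElem?_zero_headD w hw] at h2
    exact (Option.some_injective _ h2).symm
  have E : u ++ (List.replicate (k + 1) w).flatten = List.ofFn (fun i : Fin N => s i) := by
    apply List.ext_getElem?
    intro j
    have hlen : (u ++ (List.replicate (k + 1) w).flatten).length = N := by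
      rw [List.length_append, rep_len]
    by_cases hj : j < N
    · rw [generates_elem hgen (k + 1) j (by omega), List.getElem?_ofFn]
      simp [List.ofFnNthVal, hj]
    · rw [List.getElem?_eq_none (by omega), List.getElem?_eq_none (by simp; omega)]
  have e2 : gmap (u ++ (List.replicate (k + 1) w).flatten) fw
      = List.map (fun i => decide (s (posa i + 1) = AF.f)) (List.range (cntA s N)) := by
    rw [E, ← hsN]
    exact gmap_prefix hmono hpos hsurj N
  have hlen2 : (gmap (u ++ w) fw).length + k * (gmap w fw).length = cntA s N := by
    have := congrArg List.length (e1.trans e2)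
    rw [List.length_append, rep_len, List.length_map, List.length_range] at this
    exact this
  rw [e1.trans e2, List.getElem?_map, List.getElem?_range (by omega)]
  rfl

/-- There is an absolute constant `C` such that, for every
pair `(T1, T2)` of SLPs over `{a,f}` of total size `m` with `a` occurring in
`str(T2)`, letting `s = str(T1)·str(T2)^ω`, there is a pair `(P1, P2)` of
SLPs over `{0,1}` of total size at most `C·m` generating `h(s)`, where
`h = h3 ∘ h2 ∘ h1` replaces every (necessarily disjoint) occurrence of the
factor `af` by `1`, every remaining `a` by `0`, and erases every remaining
`f`.  Equivalently (and this is how `h(s)` is phrased here): if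
`posa : ℕ → ℕ` enumerates, in increasing order, exactly the positions of the
letter `a` in `s`, then `h(s)` is the sequence whose `i`-th entry is `1`
(`true`) iff the `a` at position `posa i` is immediately followed by `f`. -/
theorem transcript_pair_to_indicator_pair :
    ∃ C : ℕ, ∀ (T1 T2 : CnfSLP AF) (s : ℕ → AF) (posa : ℕ → ℕ),
      AF.a ∈ T2.str →
      Generates T1.str T2.str s →
      StrictMono posa →
      (∀ i : ℕ, s (posa i) = AF.a) →
      (∀ n : ℕ, s n = AF.a → ∃ i, posa i = n) →
      ∃ P1 P2 : CnfSLP Bool,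
        P1.size + P2.size ≤ C * (T1.size + T2.size) ∧
        Generates P1.str P2.str (fun i => decide (s (posa i + 1) = AF.f)) := by
  refine ⟨8, fun T1 T2 s posa hA hgen hmono hpos hsurj => ?_⟩
  set fw := T2.str.headD AF.a with hfw
  have hA12 : AF.a ∈ (T1.catSLP T2).str := by
    rw [CnfSLP.catSLP_str]
    exact List.mem_append_right _ hA
  refine ⟨(T1.catSLP T2).transform fw, T2.transform fw, ?_, ?_⟩
  · have h1 : ((T1.catSLP T2).transform fw).size = 2 * (T1.n + T2.n + 1) := by
      rw [CnfSLP.transform_size, CnfSLP.catSLP_n]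
    have h2 : (T2.transform fw).size = 2 * T2.n := rfl
    have hn1 : 0 < T1.n := T1.ax.pos
    have hn2 : 0 < T2.n := T2.ax.pos
    rw [h1, h2]
    show _ ≤ 8 * (T1.n + T2.n)
    omega
  · have hP1 : ((T1.catSLP T2).transform fw).str = gmap (T1.str ++ T2.str) fw := by
      rw [CnfSLP.transform_str _ _ hA12, CnfSLP.catSLP_str]
    have hP2 : (T2.transform fw).str = gmap T2.str fw := CnfSLP.transform_str _ _ hA
    rw [hP1, hP2]
    exact key_generates T1.str T2.str s posa hA hgen hmono hpos hsurj
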